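/- arXiv:1808.05362 — 2 statements merged into one kernel-verified Lean document; each statement's English description precedes it below -/
import Mathlib

section
/- Let x be a random variable with lim_{τ→∞} τ^4 P(|x| > τ) = 0, and let η_n → 0 with η_n n^{1/5} → ∞. Then the fourth moment of the truncated variable satisfies E[|x·1(|x|<η_n√n)|^4] = o(log n) as n → ∞. -/
open MeasureTheory Filter Topology Asymptotics

lemma trunc_key_bound {Ω : Type*} [MeasurableSpace Ω] (μ : Measure Ω)
    [IsProbabilityMeasure μ] (x : Ω → ℝ) {c T δ : ℝ} (hT : 1 ≤ T) (hc : 0 < c)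
    (hδ : 0 ≤ δ) {K : ℕ} (hK : c ≤ 2 ^ K * T)
    (htail : ∀ τ, T ≤ τ → τ ^ 4 * (μ {ω | τ < |x ω|}).toReal ≤ δ) :
    ∫ ω, |if |x ω| < c then x ω else 0| ^ 4 ∂μ ≤ T ^ 4 + 16 * δ * K := by
  have hTpos : (0:ℝ) < T := lt_of_lt_of_le one_pos hT
  set f : Ω → ℝ := fun ω => |if |x ω| < c then x ω else 0| ^ 4 with hfdef
  have hf_nonneg : ∀ ω, 0 ≤ f ω := fun ω => by positivity
  have hf_le : ∀ ω, f ω ≤ c ^ 4 := by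
    intro ω
    have h1 : |if |x ω| < c then x ω else 0| ≤ c := by
      split_ifs with h
      · exact h.le
      · simpa using hc.le
    exact pow_le_pow_left₀ (abs_nonneg _) h1 4
  have hf_le_x : ∀ ω, f ω ≤ |x ω| ^ 4 := by
    intro ω
    have h1 : |if |x ω| < c then x ω else 0| ≤ |x ω| := by
      split_ifs with h
      · exact le_rfl
      · simp [abs_nonneg]
    exact pow_le_pow_left₀ (abs_nonneg _) h1 4
  by_cases hInt : Integrable f μ
  swap
  · rw [hfdef] at hInt ⊢
    rw [integral_undef hInt]; positivity
  obtain ⟨g0, hg0m, hg0e⟩ := hInt.1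
  set g : Ω → ℝ := fun ω => min (max (g0 ω) 0) (c ^ 4) with hgdef
  have hgm : Measurable g := (hg0m.measurable.max measurable_const).min measurable_const
  have hge : f =ᵐ[μ] g := by
    filter_upwards [hg0e] with ω hω
    simp only [hgdef, ← hω, max_eq_left (hf_nonneg ω), min_eq_left (hf_le ω)]
  have hg_nonneg : ∀ ω, 0 ≤ g ω := fun ω => le_min (le_max_right _ _) (by positivity)
  have hg_le : ∀ ω, g ω ≤ c ^ 4 := fun ω => min_le_right _ _
  set B : ℕ → Set Ω := fun k => {ω | ((2:ℝ) ^ k * T) ^ 4 < g ω} with hBdef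
  have hB : ∀ k, MeasurableSet (B k) := fun k => measurableSet_lt measurable_const hgm
  set F : Ω → ℝ := fun ω => T ^ 4 + ∑ k ∈ Finset.range K,
      ((2:ℝ) ^ (k+1) * T) ^ 4 * Set.indicator (B k) (fun _ => (1:ℝ)) ω with hFdef
  have hterm_nonneg : ∀ (ω : Ω) (k : ℕ),
      0 ≤ ((2:ℝ) ^ (k+1) * T) ^ 4 * Set.indicator (B k) (fun _ => (1:ℝ)) ω := by
    intro ω k
    have : (0:ℝ) ≤ Set.indicator (B k) (fun _ => (1:ℝ)) ω :=
      Set.indicator_nonneg (fun _ _ => zero_le_one) ω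
    positivity
  -- pointwise bound g ≤ F
  have hgF : ∀ ω, g ω ≤ F ω := by
    intro ω
    by_cases h : g ω ≤ T ^ 4
    · exact h.trans (le_add_of_nonneg_right (Finset.sum_nonneg fun k _ => hterm_nonneg ω k))
    push_neg at h
    have hQ : ∃ m, ¬ ((2:ℝ) ^ m * T) ^ 4 < g ω := by
      refine ⟨K, not_lt.mpr ?_⟩
      exact (hg_le ω).trans (pow_le_pow_left₀ hc.le hK 4)
    have hmspec := Nat.find_spec hQ
    set m := Nat.find hQ with hmdef
    have hm0 : m ≠ 0 := by
      intro h0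
      rw [h0] at hmspec
      simp only [pow_zero, one_mul] at hmspec
      exact hmspec h
    have hmK : m ≤ K := Nat.find_min' hQ
      (not_lt.mpr ((hg_le ω).trans (pow_le_pow_left₀ hc.le hK 4)))
    set k := m - 1 with hkdef
    have hkm : k < m := Nat.sub_lt (Nat.pos_of_ne_zero hm0) one_pos
    have hkK : k < K := lt_of_lt_of_le hkm hmK
    have hksucc : k + 1 = m := Nat.succ_pred_eq_of_pos (Nat.pos_of_ne_zero hm0)
    have hPk : ((2:ℝ) ^ k * T) ^ 4 < g ω := not_not.mp (fun hcon => Nat.find_min hQ hkm hcon)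
    have hωB : ω ∈ B k := hPk
    have hgle : g ω ≤ ((2:ℝ) ^ (k+1) * T) ^ 4 := by
      have := hmspec
      rw [← hksucc] at this
      exact not_lt.mp this
    have hsingle : ((2:ℝ) ^ (k+1) * T) ^ 4 * Set.indicator (B k) (fun _ => (1:ℝ)) ω
        ≤ ∑ j ∈ Finset.range K, ((2:ℝ) ^ (j+1) * T) ^ 4 * Set.indicator (B j) (fun _ => (1:ℝ)) ω :=
      Finset.single_le_sum (fun j _ => hterm_nonneg ω j) (Finset.mem_range.mpr hkK)
    have hind : Set.indicator (B k) (fun _ => (1:ℝ)) ω = 1 := Set.indicator_of_mem hωB _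
    rw [hind, mul_one] at hsingle
    have : g ω ≤ ∑ j ∈ Finset.range K, ((2:ℝ) ^ (j+1) * T) ^ 4 *
        Set.indicator (B j) (fun _ => (1:ℝ)) ω := hgle.trans hsingle
    exact le_add_of_nonneg_of_le (by positivity) this
  -- integrability of F
  have hFInt : Integrable F μ := by
    refine (integrable_const _).add (integrable_finset_sum _ fun k _ => ?_)
    exact ((integrable_const (1:ℝ)).indicator (hB k)).const_mul _
  have hgInt : Integrable g μ := hInt.congr hge
  have step1 : ∫ ω, f ω ∂μ = ∫ ω, g ω ∂μ := integral_congr_ae hge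
  have step2 : ∫ ω, g ω ∂μ ≤ ∫ ω, F ω ∂μ := integral_mono hgInt hFInt hgF
  have step3 : ∫ ω, F ω ∂μ = T ^ 4 + ∑ k ∈ Finset.range K,
      ((2:ℝ) ^ (k+1) * T) ^ 4 * (μ (B k)).toReal := by
    rw [hFdef, integral_add (integrable_const _)
      (integrable_finset_sum _ fun k _ => ((integrable_const (1:ℝ)).indicator (hB k)).const_mul _),
      integral_const, integral_finset_sum _
      (fun k _ => ((integrable_const (1:ℝ)).indicator (hB k)).const_mul _)]
    simp only [probReal_univ, smul_eq_mul, one_mul]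
    congr 1
    refine Finset.sum_congr rfl fun k _ => ?_
    rw [integral_const_mul]
    congr 1
    exact integral_indicator_one (hB k)
  -- each term is at most 16 δ
  have hterm : ∀ k, ((2:ℝ) ^ (k+1) * T) ^ 4 * (μ (B k)).toReal ≤ 16 * δ := by
    intro k
    have h2k : (1:ℝ) ≤ 2 ^ k := one_le_pow₀ one_le_two
    have hτ : T ≤ (2:ℝ) ^ k * T := le_mul_of_one_le_left hTpos.le h2k
    have hsub : μ (B k) ≤ μ {ω | (2:ℝ) ^ k * T < |x ω|} := by
      refine measure_mono_ae ?_
      filter_upwards [hge] with ω hω hωB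
      have h1 : ((2:ℝ) ^ k * T) ^ 4 < f ω := by rw [hω]; exact hωB
      have h2 : ((2:ℝ) ^ k * T) ^ 4 < |x ω| ^ 4 := lt_of_lt_of_le h1 (hf_le_x ω)
      exact lt_of_pow_lt_pow_left₀ 4 (abs_nonneg _) h2
    have hsubR : (μ (B k)).toReal ≤ (μ {ω | (2:ℝ) ^ k * T < |x ω|}).toReal :=
      ENNReal.toReal_mono (measure_ne_top μ _) hsub
    have htail' := htail _ hτ
    have hcoef : ((2:ℝ) ^ (k+1) * T) ^ 4 = 16 * ((2:ℝ) ^ k * T) ^ 4 := by ring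
    rw [hcoef, mul_assoc]
    have hnn : (0:ℝ) ≤ (μ (B k)).toReal := ENNReal.toReal_nonneg
    have hpos : (0:ℝ) < ((2:ℝ) ^ k * T) ^ 4 := by positivity
    nlinarith [mul_le_mul_of_nonneg_left hsubR hpos.le]
  have hsum : ∑ k ∈ Finset.range K, ((2:ℝ) ^ (k+1) * T) ^ 4 * (μ (B k)).toReal
      ≤ 16 * δ * K := by
    calc ∑ k ∈ Finset.range K, ((2:ℝ) ^ (k+1) * T) ^ 4 * (μ (B k)).toReal
        ≤ ∑ _k ∈ Finset.range K, 16 * δ := Finset.sum_le_sum fun k _ => hterm k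
      _ = 16 * δ * K := by rw [Finset.sum_const, Finset.card_range, nsmul_eq_mul]; ring
  calc ∫ ω, f ω ∂μ = ∫ ω, g ω ∂μ := step1
    _ ≤ ∫ ω, F ω ∂μ := step2
    _ = T ^ 4 + ∑ k ∈ Finset.range K, ((2:ℝ) ^ (k+1) * T) ^ 4 * (μ (B k)).toReal := step3
    _ ≤ T ^ 4 + 16 * δ * K := by linarith

/-- For a random variable with tail `τ^4 P(|x|>τ) → 0` and truncation at `η_n √n`
(`η_n → 0`, `η_n n^{1/5} → ∞`), the fourth moment of the truncated variable is `o(log n)`. -/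
theorem truncated_fourth_moment {Ω : Type*} [MeasurableSpace Ω] (μ : Measure Ω)
    [IsProbabilityMeasure μ] (x : Ω → ℝ)
    (hx : Tendsto (fun τ : ℝ => τ ^ 4 * (μ {ω | τ < |x ω|}).toReal) atTop (𝓝 0))
    (η : ℕ → ℝ) (hη0 : Tendsto η atTop (𝓝 0))
    (hη : Tendsto (fun n : ℕ => η n * (n : ℝ) ^ ((1 : ℝ) / 5)) atTop atTop) :
    (fun n : ℕ => ∫ ω, |if |x ω| < η n * Real.sqrt n then x ω else 0| ^ 4 ∂μ)
      =o[atTop] (fun n : ℕ => Real.log n) := by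
  have hlog2 : (0:ℝ) < Real.log 2 := Real.log_pos one_lt_two
  rw [isLittleO_iff]
  intro ε hε
  set δ : ℝ := ε * Real.log 2 / 64 with hδdef
  have hδpos : 0 < δ := by positivity
  -- pick tail threshold T
  obtain ⟨T₀, hT₀⟩ := (hx.eventually (gt_mem_nhds hδpos)).exists_forall_of_atTop
  set T : ℝ := max T₀ 1 with hTdef
  have hT1 : (1:ℝ) ≤ T := le_max_right _ _
  have htail : ∀ τ, T ≤ τ → τ ^ 4 * (μ {ω | τ < |x ω|}).toReal ≤ δ := fun τ hτ =>
    (hT₀ τ ((le_max_left _ _).trans hτ)).le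
  -- log n → ∞
  have hlogn : Tendsto (fun n : ℕ => Real.log n) atTop atTop :=
    Real.tendsto_log_atTop.comp tendsto_natCast_atTop_atTop
  have hev1 : ∀ᶠ n : ℕ in atTop, (1:ℝ) ≤ η n * (n : ℝ) ^ ((1:ℝ)/5) := hη.eventually_ge_atTop 1
  have hev2 : ∀ᶠ n : ℕ in atTop, |η n| < 1 := by
    have := hη0.eventually (Metric.ball_mem_nhds (0:ℝ) one_pos)
    simpa [Real.dist_eq] using this
  have hev3 : ∀ᶠ n : ℕ in atTop, 1 ≤ n := eventually_ge_atTop 1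
  have hev4 : ∀ᶠ n : ℕ in atTop, (T ^ 4 + 32 * δ) / (3 * ε / 4) ≤ Real.log n :=
    hlogn.eventually_ge_atTop _
  filter_upwards [hev1, hev2, hev3, hev4] with n h1 h2 h3 h4
  have hn1 : (1:ℝ) ≤ (n:ℝ) := by exact_mod_cast h3
  have hnpos : (0:ℝ) < (n:ℝ) := lt_of_lt_of_le one_pos hn1
  have hn5 : (0:ℝ) < (n:ℝ) ^ ((1:ℝ)/5) := Real.rpow_pos_of_pos hnpos _
  have hηpos : 0 < η n := by nlinarith
  have hηle : η n ≤ 1 := (abs_lt.mp h2).2.le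
  have hsq : (0:ℝ) < Real.sqrt n := Real.sqrt_pos.mpr hnpos
  have hc : 0 < η n * Real.sqrt n := mul_pos hηpos hsq
  set K : ℕ := ⌈Real.logb 2 (n:ℝ)⌉₊ + 1 with hKdef
  have hlogb0 : 0 ≤ Real.logb 2 (n:ℝ) := Real.logb_nonneg one_lt_two hn1
  have h2K : (n:ℝ) ≤ (2:ℝ) ^ K := by
    have h5 : Real.logb 2 (n:ℝ) ≤ (K:ℝ) := by
      have := Nat.le_ceil (Real.logb 2 (n:ℝ))
      push_cast [hKdef]
      linarith
    calc (n:ℝ) = (2:ℝ) ^ (Real.logb 2 (n:ℝ)) := (Real.rpow_logb two_pos (by norm_num) hnpos).symm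
      _ ≤ (2:ℝ) ^ ((K:ℝ)) := Real.rpow_le_rpow_of_exponent_le one_le_two h5
      _ = (2:ℝ) ^ K := by rw [Real.rpow_natCast]
  have hK : η n * Real.sqrt n ≤ 2 ^ K * T := by
    have hs1 : Real.sqrt (n:ℝ) ≤ (n:ℝ) := by
      have := Real.sqrt_le_sqrt (show (n:ℝ) ≤ (n:ℝ) ^ 2 by nlinarith)
      rwa [Real.sqrt_sq hnpos.le] at this
    have hs2 : η n * Real.sqrt n ≤ Real.sqrt n := by nlinarith
    have h2Kpos : (0:ℝ) < (2:ℝ) ^ K := by positivity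
    calc η n * Real.sqrt n ≤ (n:ℝ) := hs2.trans hs1
      _ ≤ (2:ℝ) ^ K := h2K
      _ ≤ 2 ^ K * T := le_mul_of_one_le_right h2Kpos.le hT1
  have hbound := trunc_key_bound μ x hT1 hc hδpos.le hK htail
  have hKle : (K:ℝ) ≤ Real.log n / Real.log 2 + 2 := by
    have hceil : (⌈Real.logb 2 (n:ℝ)⌉₊ : ℝ) < Real.logb 2 (n:ℝ) + 1 :=
      Nat.ceil_lt_add_one hlogb0
    have : Real.logb 2 (n:ℝ) = Real.log n / Real.log 2 := by rw [Real.logb]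
    push_cast [hKdef]
    linarith
  have hint_nonneg : 0 ≤ ∫ ω, |if |x ω| < η n * Real.sqrt n then x ω else 0| ^ 4 ∂μ :=
    integral_nonneg fun ω => by positivity
  have hlogn0 : 0 ≤ Real.log n := Real.log_natCast_nonneg n
  rw [Real.norm_eq_abs, Real.norm_eq_abs, abs_of_nonneg hint_nonneg, abs_of_nonneg hlogn0]
  have hKbound : 16 * δ * (K:ℝ) ≤ (ε / 4) * Real.log n + 32 * δ := by
    have h16 : 16 * δ / Real.log 2 = ε / 4 := by
      rw [hδdef]; field_simp; ring
    have := mul_le_mul_of_nonneg_left hKle (by positivity : (0:ℝ) ≤ 16 * δ)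
    calc 16 * δ * (K:ℝ) ≤ 16 * δ * (Real.log n / Real.log 2 + 2) := this
      _ = (16 * δ / Real.log 2) * Real.log n + 32 * δ := by field_simp; ring
      _ = (ε / 4) * Real.log n + 32 * δ := by rw [h16]
  have hT4 : T ^ 4 + 32 * δ ≤ (3 * ε / 4) * Real.log n := by
    rw [div_le_iff₀ (by positivity : (0:ℝ) < 3 * ε / 4)] at h4
    linarith
  calc ∫ ω, |if |x ω| < η n * Real.sqrt n then x ω else 0| ^ 4 ∂μ
      ≤ T ^ 4 + 16 * δ * K := hbound
    _ ≤ T ^ 4 + ((ε / 4) * Real.log n + 32 * δ) := by linarith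
    _ ≤ ε * Real.log n := by linarith
end

section
/- Let x be a random variable with lim_{τ→∞} τ^4 P(|x| > τ) = 0, and let η_n → 0 with η_n n^{1/5} → ∞. Then for any integer α > 4, E[|x|^α · 1(|x| < η_n√n)] = o((√n)^{α−4}) as n → ∞. -/
open MeasureTheory Filter Topology Asymptotics

/-- Key per-`n` bound: if the tail satisfies `(μ {|x| > t}).toReal ≤ ε'/t^4` for `t ≥ τ₀`,
then the truncated `α`-th moment at level `c > τ₀` is at most `α τ₀^α + α ε' c^(α-4)`. -/
lemma truncated_key_bound {Ω : Type*} [MeasurableSpace Ω] (μ : Measure Ω)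
    [IsProbabilityMeasure μ] (x : Ω → ℝ) (α : ℕ) (hα : 4 < α)
    {ε' τ₀ c : ℝ} (hε' : 0 < ε') (hτ₀ : 1 ≤ τ₀) (hc : τ₀ < c)
    (htail : ∀ t : ℝ, τ₀ ≤ t → (μ {ω | t < |x ω|}).toReal ≤ ε' / t ^ 4) :
    ‖∫ ω, (if |x ω| < c then |x ω| ^ α else 0) ∂μ‖ ≤
      α * τ₀ ^ α + α * ε' * c ^ (α - 4) := by
  have hτ₀0 : (0:ℝ) < τ₀ := lt_of_lt_of_le one_pos hτ₀
  have hc0 : (0:ℝ) < c := hτ₀0.trans hc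
  have hα0 : (0:ℝ) < (α:ℝ) := by positivity
  set f : Ω → ℝ := fun ω => if |x ω| < c then |x ω| else 0 with hf
  have hf0 : ∀ ω, 0 ≤ f ω := by
    intro ω; simp only [hf]; split <;> [exact abs_nonneg _; exact le_rfl]
  have hflt : ∀ ω, f ω < c := by
    intro ω; simp only [hf]; split <;> [assumption; exact hc0]
  have hfle : ∀ ω, f ω ≤ |x ω| := by
    intro ω; simp only [hf]; split <;> [exact le_rfl; exact abs_nonneg _]
  have hfa : ∀ ω, (if |x ω| < c then |x ω| ^ α else 0) = f ω ^ α := by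
    intro ω; simp only [hf]; split
    · rfl
    · rw [zero_pow (by omega)]
  simp_rw [hfa]
  have hRHS : 0 ≤ (α:ℝ) * τ₀ ^ α + α * ε' * c ^ (α - 4) := by positivity
  by_cases hint : Integrable (fun ω => f ω ^ α) μ
  swap
  · rw [integral_undef hint, norm_zero]; exact hRHS
  have hmeasα : AEMeasurable (fun ω => f ω ^ α) μ := hint.aemeasurable
  have hmf : AEMeasurable f μ := by
    have hfeq : f = fun ω => (f ω ^ α) ^ ((α:ℝ)⁻¹) := by
      funext ω
      rw [← Real.rpow_natCast (f ω) α, ← Real.rpow_mul (hf0 ω),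
        mul_inv_cancel₀ (ne_of_gt hα0), Real.rpow_one]
    rw [hfeq]
    exact (Real.continuous_rpow_const (by positivity)).measurable.comp_aemeasurable hmeasα
  rw [integral_eq_lintegral_of_nonneg_ae (ae_of_all μ fun ω => pow_nonneg (hf0 ω) α)
    hint.aestronglyMeasurable, Real.norm_of_nonneg ENNReal.toReal_nonneg]
  apply ENNReal.toReal_le_of_le_ofReal hRHS
  -- layer cake with g t = α * t^(α-1)
  have hg : ∀ s : ℝ, ∫ t in (0:ℝ)..s, (α:ℝ) * t ^ (α - 1) = s ^ α := by
    intro s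
    rw [intervalIntegral.integral_const_mul, integral_pow]
    have h1 : α - 1 + 1 = α := by omega
    rw [h1, zero_pow (by omega : α ≠ 0), sub_zero]
    field_simp
    have h2 : ((α - 1 : ℕ) : ℝ) + 1 = α := by exact_mod_cast h1
    rw [h2]; ring
  have hlayer : ∫⁻ ω, ENNReal.ofReal (f ω ^ α) ∂μ
      = ∫⁻ t in Set.Ioi (0:ℝ), μ {a | t < f a} * ENNReal.ofReal ((α:ℝ) * t ^ (α - 1)) := by
    have := lintegral_comp_eq_lintegral_meas_lt_mul μ (f := f)
      (g := fun t => (α:ℝ) * t ^ (α - 1)) (ae_of_all μ hf0) hmf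
      (fun t _ => ((continuous_const.mul (continuous_pow _)).intervalIntegrable 0 t))
      ((ae_restrict_iff' measurableSet_Ioi).2 (ae_of_all _ fun t ht => by
        have : (0:ℝ) < t := ht
        positivity))
    simp_rw [hg] at this
    exact this
  rw [hlayer]
  have hsub : Set.Ioi (0:ℝ) ⊆ (Set.Ioc 0 τ₀ ∪ Set.Ioc τ₀ c) ∪ Set.Ioi c := by
    intro t ht
    rcases le_or_gt t τ₀ with h1 | h1
    · exact Or.inl (Or.inl ⟨ht, h1⟩)
    · rcases le_or_gt t c with h2 | h2
      · exact Or.inl (Or.inr ⟨h1, h2⟩)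
      · exact Or.inr h2
  refine le_trans (lintegral_mono_set hsub) ?_
  refine le_trans (lintegral_union_le _ _ _) ?_
  refine le_trans (add_le_add (lintegral_union_le _ _ _) le_rfl) ?_
  -- third piece is zero
  have hpiece3 : ∫⁻ t in Set.Ioi c, μ {a | t < f a} * ENNReal.ofReal ((α:ℝ) * t ^ (α - 1))
      = 0 := by
    rw [setLIntegral_congr_fun measurableSet_Ioi (fun t (ht : c < t) => ?_),
      lintegral_zero]
    have hempty : {a | t < f a} = ∅ := by
      ext a; simp only [Set.mem_setOf_eq, Set.mem_empty_iff_false, iff_false, not_lt]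
      exact ((hflt a).trans ht).le
    rw [hempty, measure_empty, zero_mul]
  -- first piece
  have hpiece1 : ∫⁻ t in Set.Ioc (0:ℝ) τ₀, μ {a | t < f a} * ENNReal.ofReal ((α:ℝ) * t ^ (α - 1))
      ≤ ENNReal.ofReal ((α:ℝ) * τ₀ ^ α) := by
    have hb : ∫⁻ t in Set.Ioc (0:ℝ) τ₀, μ {a | t < f a} * ENNReal.ofReal ((α:ℝ) * t ^ (α - 1))
        ≤ ∫⁻ _ in Set.Ioc (0:ℝ) τ₀, ENNReal.ofReal ((α:ℝ) * τ₀ ^ (α - 1)) := by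
      refine setLIntegral_mono' measurableSet_Ioc fun t ht => ?_
      obtain ⟨ht0, htτ⟩ := ht
      calc μ {a | t < f a} * ENNReal.ofReal ((α:ℝ) * t ^ (α - 1))
          ≤ 1 * ENNReal.ofReal ((α:ℝ) * τ₀ ^ (α - 1)) := by
            refine mul_le_mul' prob_le_one (ENNReal.ofReal_le_ofReal ?_)
            exact mul_le_mul_of_nonneg_left (pow_le_pow_left₀ ht0.le htτ _) hα0.le
        _ = ENNReal.ofReal ((α:ℝ) * τ₀ ^ (α - 1)) := one_mul _
    refine hb.trans ?_
    rw [setLIntegral_const, Real.volume_Ioc, sub_zero,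
      ← ENNReal.ofReal_mul (by positivity)]
    refine ENNReal.ofReal_le_ofReal ?_
    rw [mul_assoc, ← pow_succ]
    have : α - 1 + 1 = α := by omega
    rw [this]
  -- second piece
  have hpiece2 : ∫⁻ t in Set.Ioc τ₀ c, μ {a | t < f a} * ENNReal.ofReal ((α:ℝ) * t ^ (α - 1))
      ≤ ENNReal.ofReal ((α:ℝ) * ε' * c ^ (α - 4)) := by
    have hb : ∫⁻ t in Set.Ioc τ₀ c, μ {a | t < f a} * ENNReal.ofReal ((α:ℝ) * t ^ (α - 1))
        ≤ ∫⁻ _ in Set.Ioc τ₀ c, ENNReal.ofReal ((α:ℝ) * ε' * c ^ (α - 5)) := by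
      refine setLIntegral_mono' measurableSet_Ioc fun t ht => ?_
      obtain ⟨htτ, htc⟩ := ht
      have ht0 : (0:ℝ) < t := hτ₀0.trans htτ
      have hμ : μ {a | t < f a} ≤ ENNReal.ofReal (ε' / t ^ 4) := by
        have hss : {a | t < f a} ⊆ {ω | t < |x ω|} := fun a ha =>
          lt_of_lt_of_le (show t < f a from ha) (hfle a)
        refine le_trans (measure_mono hss) ?_
        rw [ENNReal.le_ofReal_iff_toReal_le (measure_ne_top μ _) (by positivity)]
        exact htail t htτ.le
      calc μ {a | t < f a} * ENNReal.ofReal ((α:ℝ) * t ^ (α - 1))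
          ≤ ENNReal.ofReal (ε' / t ^ 4) * ENNReal.ofReal ((α:ℝ) * t ^ (α - 1)) :=
            mul_le_mul' hμ le_rfl
        _ = ENNReal.ofReal (ε' / t ^ 4 * ((α:ℝ) * t ^ (α - 1))) :=
            (ENNReal.ofReal_mul (by positivity)).symm
        _ ≤ ENNReal.ofReal ((α:ℝ) * ε' * c ^ (α - 5)) := by
            refine ENNReal.ofReal_le_ofReal ?_
            have hsplit : t ^ (α - 1) = t ^ (α - 5) * t ^ 4 := by
              rw [← pow_add]
              congr 1
              omega
            rw [hsplit]
            have ht4 : (0:ℝ) < t ^ 4 := by positivity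
            have hle : t ^ (α - 5) ≤ c ^ (α - 5) :=
              pow_le_pow_left₀ ht0.le htc _
            have heq : ε' / t ^ 4 * ((α:ℝ) * (t ^ (α - 5) * t ^ 4))
                = (α:ℝ) * ε' * t ^ (α - 5) := by
              field_simp
            rw [heq]
            exact mul_le_mul_of_nonneg_left hle (by positivity)
    refine hb.trans ?_
    rw [setLIntegral_const, Real.volume_Ioc, ← ENNReal.ofReal_mul (by positivity)]
    refine ENNReal.ofReal_le_ofReal ?_
    have h1 : c - τ₀ ≤ c := by linarith
    calc (α:ℝ) * ε' * c ^ (α - 5) * (c - τ₀)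
        ≤ (α:ℝ) * ε' * c ^ (α - 5) * c := by
          exact mul_le_mul_of_nonneg_left h1 (by positivity)
      _ = (α:ℝ) * ε' * c ^ (α - 4) := by
          rw [mul_assoc, ← pow_succ]
          congr 2
          omega
  refine le_trans (add_le_add (add_le_add hpiece1 hpiece2) hpiece3.le) (le_of_eq ?_)
  rw [add_zero, ← ENNReal.ofReal_add (by positivity) (by positivity)]

/-- For a random variable with tail `τ^4 P(|x|>τ) → 0` and truncation at `η_n √n`
(`η_n → 0`, `η_n n^{1/5} → ∞`), for any integer `α > 4`,
`E[|x|^α 1(|x| < η_n √n)] = o((√n)^(α-4))`. -/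
theorem truncated_high_moments {Ω : Type*} [MeasurableSpace Ω] (μ : Measure Ω)
    [IsProbabilityMeasure μ] (x : Ω → ℝ)
    (hx : Tendsto (fun τ : ℝ => τ ^ 4 * (μ {ω | τ < |x ω|}).toReal) atTop (𝓝 0))
    (η : ℕ → ℝ) (hη0 : Tendsto η atTop (𝓝 0))
    (hη : Tendsto (fun n : ℕ => η n * (n : ℝ) ^ ((1 : ℝ) / 5)) atTop atTop)
    (α : ℕ) (hα : 4 < α) :
    (fun n : ℕ => ∫ ω, (if |x ω| < η n * Real.sqrt n then |x ω| ^ α else 0) ∂μ)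
      =o[atTop] (fun n : ℕ => Real.sqrt n ^ ((α : ℤ) - 4)) := by
  have hα0 : (0:ℝ) < (α:ℝ) := by positivity
  rw [isLittleO_iff]
  intro ε hε
  set ε' : ℝ := ε / (2 * α) with hε'def
  have hε'pos : 0 < ε' := by positivity
  -- tail threshold
  have h1 : ∀ᶠ τ in atTop, |τ ^ 4 * (μ {ω | τ < |x ω|}).toReal| < ε' := by
    filter_upwards [Metric.tendsto_nhds.1 hx ε' hε'pos] with τ hτ
    rwa [Real.dist_0_eq_abs] at hτ
  obtain ⟨N, hN⟩ := eventually_atTop.1 h1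
  set τ₀ : ℝ := max N 1 with hτ₀def
  have hτ₀1 : (1:ℝ) ≤ τ₀ := le_max_right _ _
  have hτ₀0 : (0:ℝ) < τ₀ := lt_of_lt_of_le one_pos hτ₀1
  have htail : ∀ t : ℝ, τ₀ ≤ t → (μ {ω | t < |x ω|}).toReal ≤ ε' / t ^ 4 := by
    intro t ht
    have hb := hN t ((le_max_left N 1).trans ht)
    have ht0 : (0:ℝ) < t := hτ₀0.trans_le ht
    have ht4 : (0:ℝ) < t ^ 4 := by positivity
    have hnn : 0 ≤ t ^ 4 * (μ {ω | t < |x ω|}).toReal :=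
      mul_nonneg ht4.le ENNReal.toReal_nonneg
    rw [abs_of_nonneg hnn] at hb
    rw [le_div_iff₀ ht4]
    linarith [hb, mul_comm (t ^ 4) (μ {ω | t < |x ω|}).toReal]
  -- c_n → ∞
  have hcinf : Tendsto (fun n : ℕ => η n * Real.sqrt n) atTop atTop := by
    refine tendsto_atTop_mono' atTop ?_ hη
    filter_upwards [hη.eventually_gt_atTop 0, eventually_ge_atTop 1] with n h0 h1n
    have hn1 : (1:ℝ) ≤ (n:ℝ) := by exact_mod_cast h1n
    have hp0 : (0:ℝ) < (n:ℝ) ^ ((1:ℝ)/5) := Real.rpow_pos_of_pos (by linarith) _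
    have hηn : 0 < η n := by
      by_contra hcon
      push_neg at hcon
      nlinarith [mul_nonpos_of_nonpos_of_nonneg hcon hp0.le]
    have hle : (n:ℝ) ^ ((1:ℝ)/5) ≤ Real.sqrt n := by
      rw [Real.sqrt_eq_rpow]
      exact Real.rpow_le_rpow_of_exponent_le hn1 (by norm_num)
    exact mul_le_mul_of_nonneg_left hle hηn.le
  -- √n ^ (α-4) → ∞
  have hsq : Tendsto (fun n : ℕ => Real.sqrt n) atTop atTop := by
    have h2 : Tendsto Real.sqrt atTop atTop := by
      rw [funext Real.sqrt_eq_rpow]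
      exact tendsto_rpow_atTop (by norm_num)
    exact h2.comp tendsto_natCast_atTop_atTop
  have hsqrtinf : Tendsto (fun n : ℕ => Real.sqrt n ^ (α - 4)) atTop atTop :=
    (tendsto_pow_atTop (by omega : α - 4 ≠ 0)).comp hsq
  filter_upwards [hcinf.eventually_gt_atTop τ₀,
    hsqrtinf.eventually_ge_atTop (2 * α * τ₀ ^ α / ε),
    hη0.eventually (Metric.ball_mem_nhds (0:ℝ) one_pos)] with n hn2 hn3 hn4
  have hkey := truncated_key_bound μ x α hα hε'pos hτ₀1 hn2 htail
  have hc0 : (0:ℝ) < η n * Real.sqrt n := hτ₀0.trans hn2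
  have hsn0 : (0:ℝ) ≤ Real.sqrt n := Real.sqrt_nonneg _
  have hη1 : η n ≤ 1 := by
    have : |η n| < 1 := by simpa [Real.dist_eq] using hn4
    linarith [abs_nonneg (η n), le_abs_self (η n)]
  have hcle : η n * Real.sqrt n ≤ Real.sqrt n := by
    nlinarith
  -- rewrite RHS norm
  have hzpow : Real.sqrt n ^ ((α : ℤ) - 4) = Real.sqrt n ^ (α - 4) := by
    have : (α : ℤ) - 4 = ((α - 4 : ℕ) : ℤ) := by omega
    rw [this, zpow_natCast]
  rw [hzpow, Real.norm_of_nonneg (pow_nonneg hsn0 _)]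
  refine hkey.trans ?_
  have hterm1 : (α:ℝ) * τ₀ ^ α ≤ ε / 2 * Real.sqrt n ^ (α - 4) := by
    rw [div_le_iff₀ hε] at hn3
    calc (α:ℝ) * τ₀ ^ α ≤ 2 * α * τ₀ ^ α / 2 := by ring_nf; nlinarith [pow_pos hτ₀0 α]
      _ ≤ ε / 2 * Real.sqrt n ^ (α - 4) := by linarith
  have hterm2 : (α:ℝ) * ε' * (η n * Real.sqrt n) ^ (α - 4)
      ≤ ε / 2 * Real.sqrt n ^ (α - 4) := by
    have hpow : (η n * Real.sqrt n) ^ (α - 4) ≤ Real.sqrt n ^ (α - 4) :=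
      pow_le_pow_left₀ hc0.le hcle _
    have hconst : (α:ℝ) * ε' = ε / 2 := by
      rw [hε'def]
      field_simp
    rw [hconst]
    exact mul_le_mul_of_nonneg_left hpow (by positivity)
  linarith
end
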